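/- Let M be a matroid with finite ground set and let X be a series class of M with |X| = p+1. If X is not a circuit of M, then T_M(x,y) = (x^p + x^{p-1} + \cdots + x + 1) T_{M \setminus X}(x,y) + T_{M/X}(x,y). -/

import Mathlib

open MvPolynomial Finset
open scoped Matroid

namespace TuttePaper

open Classical

variable {α : Type*}

/-- The rank of a set in a matroid: the maximum cardinality of an independent subset. -/
noncomputable def rk (M : Matroid α) (A : Set α) : ℕ :=
  sSup {n | ∃ I, M.Indep I ∧ I ⊆ A ∧ I.ncard = n}

/-- The Tutte polynomial of a matroid with finite ground set, as an element of ℤ[x,y];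
the variable `X 0` plays the role of `x` and `X 1` that of `y`:
`T_M(x,y) = ∑_{A ⊆ E} (x-1)^(r(E)-r(A)) (y-1)^(|A|-r(A))`. -/
noncomputable def tutte (M : Matroid α) : MvPolynomial (Fin 2) ℤ :=
  if hE : M.E.Finite then
    ∑ A ∈ hE.toFinset.powerset,
      (X 0 - 1) ^ (rk M M.E - rk M ↑A) * (X 1 - 1) ^ (A.card - rk M ↑A)
  else 0

/-- The Tutte polynomial with `x` evaluated at `1`, i.e. `T_M(1,y)`, as an element of ℤ[x,y]. -/
noncomputable def tutteX1 (M : Matroid α) : MvPolynomial (Fin 2) ℤ :=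
  eval₂ C (fun i => if i = 0 then 1 else X 1) (tutte M)

/-- A loop of a matroid: an element whose singleton has rank zero. -/
def IsLoop (M : Matroid α) (e : α) : Prop := rk M {e} = 0

/-- A coloop of a matroid: an element contained in every basis. -/
def IsColoop (M : Matroid α) (e : α) : Prop := ∀ B, M.IsBase B → e ∈ B

/-- A circuit of a matroid: a minimal dependent set. -/
def IsCircuit (M : Matroid α) (C : Set α) : Prop :=
  C ⊆ M.E ∧ ¬ M.Indep C ∧ ∀ D ⊂ C, M.Indep D

/-- A hyperplane of a matroid: a flat of rank `r(M) - 1`. -/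
def IsHyperplane (M : Matroid α) (H : Set α) : Prop :=
  M.IsFlat H ∧ rk M H + 1 = rk M M.E

/-- Deletion of a set of elements from a matroid. -/
def deleteSet (M : Matroid α) (D : Set α) : Matroid α := M ↾ (M.E \ D)

/-- Contraction of a set of elements in a matroid, `M/C = (M✶ \ C)✶`. -/
def contractSet (M : Matroid α) (C : Set α) : Matroid α := ((M✶) ↾ (M.E \ C))✶

/-- Deletion of a single element. -/
def deleteElem (M : Matroid α) (e : α) : Matroid α := deleteSet M {e}

/-- Contraction of a single element. -/
def contractElem (M : Matroid α) (e : α) : Matroid α := contractSet M {e}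

/-- A matroid is paving if every circuit has size at least the rank of the matroid. -/
def Paving (M : Matroid α) : Prop := ∀ C, IsCircuit M C → rk M M.E ≤ C.ncard

/-- A matroid is sparse paving if it is paving and any two distinct circuits of size `r(M)`
have symmetric difference of size greater than two. -/
def SparsePaving (M : Matroid α) : Prop :=
  Paving M ∧ ∀ C₁ C₂, IsCircuit M C₁ → IsCircuit M C₂ →
    C₁.ncard = rk M M.E → C₂.ncard = rk M M.E → C₁ ≠ C₂ → 2 < (symmDiff C₁ C₂).ncard

/-- An `m`-partition of a set `E`: a collection of at least two subsets of `E`, each with at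
least `m` elements, such that every `m`-element subset of `E` is contained in exactly one
member of the collection. -/
def IsMPartition (m : ℕ) (E : Set α) (T : Set (Set α)) : Prop :=
  1 < T.ncard ∧ (∀ B ∈ T, B ⊆ E ∧ m ≤ B.ncard) ∧
    ∀ S ⊆ E, S.ncard = m → ∃! B, B ∈ T ∧ S ⊆ B

/-- `tcoef M i j` is the coefficient `t_{ij}` of `x^i y^j` in the Tutte polynomial of `M`. -/
noncomputable def tcoef (M : Matroid α) (i j : ℕ) : ℤ :=
  MvPolynomial.coeff (Finsupp.single (0 : Fin 2) i + Finsupp.single (1 : Fin 2) j) (tutte M)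

/-- The characteristic polynomial `χ_N(λ) = ∑_{A ⊆ E} (-1)^{|A|} λ^{r(E)-r(A)}` of a matroid,
evaluated at an element `l` of a commutative ring. -/
noncomputable def charEval {R : Type*} [CommRing R] (N : Matroid α) (l : R) : R :=
  if hE : N.E.Finite then
    ∑ A ∈ hE.toFinset.powerset, (-1 : R) ^ A.card * l ^ (rk N N.E - rk N ↑A)
  else 0

/-- Crapo's coboundary polynomial `χ̄_M(λ,t) = ∑_{X flat of M} t^{|X|} χ_{M/X}(λ)`,
evaluated at elements `l`, `t` of a commutative ring. -/
noncomputable def cobEval {R : Type*} [CommRing R] (M : Matroid α) (l t : R) : R :=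
  if hE : M.E.Finite then
    (hE.toFinset.powerset.filter (fun F : Finset α => M.IsFlat ↑F)).sum
      (fun F => t ^ F.card * charEval (contractSet M ↑F) l)
  else 0


/-- A parallel class of a matroid: a maximal subset of the ground set in which any two
distinct elements are parallel (i.e. form a two-element circuit) and no element is a loop. -/
def IsParallelClass (M : Matroid α) (P : Set α) : Prop :=
  P ⊆ M.E ∧ (∀ a ∈ P, ¬ IsLoop M a) ∧
    (∀ a ∈ P, ∀ b ∈ P, a ≠ b → IsCircuit M {a, b}) ∧
    ∀ Q, P ⊆ Q → Q ⊆ M.E → (∀ a ∈ Q, ¬ IsLoop M a) →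
      (∀ a ∈ Q, ∀ b ∈ Q, a ≠ b → IsCircuit M {a, b}) → Q = P


/-! ### Auxiliary lemmas -/

section RankBasics

variable {M : Matroid α} {A B T S I J : Set α}

lemma rkSet_nonempty (M : Matroid α) (A : Set α) :
    {n | ∃ I, M.Indep I ∧ I ⊆ A ∧ I.ncard = n}.Nonempty :=
  ⟨0, ∅, M.empty_indep, Set.empty_subset _, Set.ncard_empty _⟩

lemma rkSet_bddAbove (hE : M.E.Finite) (A : Set α) :
    BddAbove {n | ∃ I, M.Indep I ∧ I ⊆ A ∧ I.ncard = n} := by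
  refine ⟨M.E.ncard, ?_⟩
  rintro n ⟨I, hI, -, rfl⟩
  exact Set.ncard_le_ncard hI.subset_ground hE

lemma rk_eq_ncard_of_basis (hE : M.E.Finite) (hA : A ⊆ M.E) (hI : M.IsBasis I A) :
    rk M A = I.ncard := by
  refine le_antisymm (csSup_le (rkSet_nonempty M A) ?_)
    (le_csSup (rkSet_bddAbove hE A) ⟨I, hI.indep, hI.subset, rfl⟩)
  rintro n ⟨J, hJ, hJA, rfl⟩
  obtain ⟨J', hJ', hJJ'⟩ := hJ.subset_isBasis_of_subset hJA hA
  have hcard : J'.encard = I.encard := hJ'.encard_eq_encard hI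
  have hJ'fin : J'.Finite := hE.subset hJ'.indep.subset_ground
  calc J.ncard ≤ J'.ncard := Set.ncard_le_ncard hJJ' hJ'fin
    _ = I.ncard := by rw [Set.ncard_def, hcard, ← Set.ncard_def]

lemma rk_mono (hE : M.E.Finite) (hAB : A ⊆ B) : rk M A ≤ rk M B := by
  refine csSup_le_csSup (rkSet_bddAbove hE B) (rkSet_nonempty M A) ?_
  rintro n ⟨I, hI, hIA, rfl⟩
  exact ⟨I, hI, hIA.trans hAB, rfl⟩

lemma rk_indep (hE : M.E.Finite) (hA : M.Indep A) : rk M A = A.ncard :=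
  rk_eq_ncard_of_basis hE hA.subset_ground hA.isBasis_self

lemma exists_indep_of_rk (hE : M.E.Finite) (A : Set α) :
    ∃ I, M.Indep I ∧ I ⊆ A ∧ I.ncard = rk M A :=
  Nat.sSup_mem (rkSet_nonempty M A) (rkSet_bddAbove hE A)

lemma rk_ground_eq_ncard_base (hE : M.E.Finite) {B : Set α} (hB : M.IsBase B) :
    rk M M.E = B.ncard :=
  rk_eq_ncard_of_basis hE subset_rfl hB.isBasis_ground

end RankBasics

section SeriesBasics

variable {M : Matroid α} {S : Set α}

lemma not_mem_closure_compl (hSE : S ⊆ M.E)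
    (hsing : ∀ e ∈ S, M✶.Indep {e})
    (hpair : ∀ e ∈ S, ∀ f ∈ S, e ≠ f → ¬ M✶.Indep {e, f})
    {e f : α} (he : e ∈ S) (hf : f ∈ S) (hef : e ≠ f) :
    e ∉ M.closure (M.E \ {e, f}) := by
  intro hecl
  set H := M.E \ {e, f} with hH
  have hpairE : ({e, f} : Set α) ⊆ M.E := by
    rintro x (rfl | rfl) <;> [exact hSE he; exact hSE hf]
  obtain ⟨B₀, hB₀, hB₀f⟩ := (Matroid.coindep_def.mpr (hsing f hf)).exists_isBase_subset_compl
  have hB₀sub : B₀ ⊆ insert e H := by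
    intro x hx
    have hxE : x ∈ M.E := hB₀.subset_ground hx
    have hxf : x ≠ f := by
      rintro rfl
      exact (hB₀f hx).2 rfl
    by_cases hxe : x = e
    · exact hxe ▸ Set.mem_insert _ _
    · exact Set.mem_insert_of_mem _ ⟨hxE, by simp [hxe, hxf]⟩
  have hsp : M.Spanning (insert e H) :=
    hB₀.spanning.superset hB₀sub (Set.insert_subset (hSE he) Set.diff_subset)
  have h1 : M.closure (insert e H) = M.E :=
    (Matroid.spanning_iff_closure_eq (Set.insert_subset (hSE he) Set.diff_subset)).mp hsp
  have h2 : M.closure H = M.E := by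
    rw [← Matroid.closure_insert_eq_of_mem_closure hecl, h1]
  have hHsp : M.Spanning H := (Matroid.spanning_iff_closure_eq Set.diff_subset).mpr h2
  obtain ⟨B, hB, hBH⟩ := hHsp.exists_isBase_subset
  exact hpair e he f hf hef
    ((Matroid.coindep_iff_exists hpairE).mpr ⟨B, hB, hBH⟩)

lemma insert_indep_of_sub (hSE : S ⊆ M.E)
    (hsing : ∀ e ∈ S, M✶.Indep {e})
    (hpair : ∀ e ∈ S, ∀ f ∈ S, e ≠ f → ¬ M✶.Indep {e, f})
    {e f : α} (he : e ∈ S) (hf : f ∈ S) (hef : e ≠ f) {J : Set α}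
    (hJ : M.Indep J) (hJH : J ⊆ M.E \ {e, f}) : M.Indep (insert e J) := by
  rw [Matroid.insert_indep_iff]
  refine ⟨hJ, fun _ => ⟨hSE he, fun hc => ?_⟩⟩
  exact not_mem_closure_compl hSE hsing hpair he hf hef (M.closure_subset_closure hJH hc)

lemma indep_union_ssubset (hE : M.E.Finite) (hSE : S ⊆ M.E)
    (hsing : ∀ e ∈ S, M✶.Indep {e})
    (hpair : ∀ e ∈ S, ∀ f ∈ S, e ≠ f → ¬ M✶.Indep {e, f})
    {I T : Set α} (hI : M.Indep I) (hIS : Disjoint I S) (hT : T ⊂ S) :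
    M.Indep (I ∪ T) := by
  have hTfin : T.Finite := (hE.subset hSE).subset hT.subset
  have key : ∀ T' : Set α, T'.Finite → T' ⊂ S → M.Indep (I ∪ T') := by
    intro T' hT'fin
    refine Set.Finite.induction_on (motive := fun t _ => t ⊂ S → M.Indep (I ∪ t)) T' hT'fin
      (fun _ => by simpa using hI) ?_
    intro a t hat htfin ih hss
    have haS : a ∈ S := hss.subset (Set.mem_insert a t)
    have htS : t ⊂ S := lt_of_le_of_lt (le_of_lt (Set.ssubset_insert hat)) hss
    obtain ⟨f, hfS, hfnot⟩ := Set.exists_of_ssubset hss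
    have hIt : M.Indep (I ∪ t) := ih htS
    have haf : a ≠ f := by rintro rfl; exact hfnot (Set.mem_insert a t)
    have hsub : I ∪ t ⊆ M.E \ {a, f} := by
      rintro x (hx | hx)
      · refine ⟨hI.subset_ground hx, ?_⟩
        rintro (rfl | rfl)
        · exact (hIS.ne_of_mem hx haS) rfl
        · exact (hIS.ne_of_mem hx hfS) rfl
      · refine ⟨hSE (htS.subset hx), ?_⟩
        rintro (rfl | rfl)
        · exact hat hx
        · exact hfnot (Set.mem_insert_of_mem a hx)
    have : M.Indep (insert a (I ∪ t)) :=
      insert_indep_of_sub hSE hsing hpair haS hfS haf hIt hsub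
    rwa [Set.union_insert]
  exact key T hTfin hT

lemma rk_union_eq (hE : M.E.Finite) (hSE : S ⊆ M.E)
    (hsing : ∀ e ∈ S, M✶.Indep {e})
    (hpair : ∀ e ∈ S, ∀ f ∈ S, e ≠ f → ¬ M✶.Indep {e, f})
    {B T : Set α} (hB : B ⊆ M.E \ S) (hT : T ⊂ S) :
    rk M (B ∪ T) = rk M B + T.ncard := by
  have hBE : B ⊆ M.E := hB.trans Set.diff_subset
  obtain ⟨I, hI⟩ := M.exists_isBasis B hBE
  have hIS : Disjoint I S := Set.disjoint_left.mpr
    (fun x hx hxS => (hB (hI.subset hx)).2 hxS)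
  have hIT : M.Indep (I ∪ T) := indep_union_ssubset hE hSE hsing hpair hI.indep hIS hT
  have hbasis : M.IsBasis (I ∪ T) (B ∪ T) := by
    refine hIT.isBasis_of_forall_insert (Set.union_subset_union_left T hI.subset) ?_
    rintro e ⟨he1, he2⟩
    have heB : e ∈ B \ I := by
      rcases he1 with h | h
      · exact ⟨h, fun hc => he2 (Set.mem_union_left _ hc)⟩
      · exact absurd (Set.mem_union_right _ h) he2
    exact (hI.insert_dep heB).superset (Set.insert_subset_insert Set.subset_union_left)
      (Set.insert_subset (hBE heB.1) (hIT.subset_ground.trans subset_rfl))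
  have hdisj : Disjoint I T := Set.disjoint_left.mpr
    (fun x hx hxT => (hB (hI.subset hx)).2 (hT.subset hxT))
  rw [rk_eq_ncard_of_basis hE (Set.union_subset hBE ((hT.subset).trans hSE)) hbasis,
    Set.ncard_union_eq hdisj (hE.subset (hBE.trans' hI.subset))
      (hE.subset ((hT.subset.trans hSE))), rk_eq_ncard_of_basis hE hBE hI]

lemma S_indep (hE : M.E.Finite) (hSE : S ⊆ M.E)
    (hsing : ∀ e ∈ S, M✶.Indep {e})
    (hpair : ∀ e ∈ S, ∀ f ∈ S, e ≠ f → ¬ M✶.Indep {e, f})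
    (hnc : ¬ IsCircuit M S) : M.Indep S := by
  by_contra hdep
  refine hnc ⟨hSE, hdep, fun D hD => ?_⟩
  have := indep_union_ssubset hE hSE hsing hpair M.empty_indep
    (Set.disjoint_left.mpr (by simp)) hD
  simpa using this

lemma rk_ground_aux (hE : M.E.Finite) (hSE : S ⊆ M.E)
    (hsing : ∀ e ∈ S, M✶.Indep {e})
    (hpair : ∀ e ∈ S, ∀ f ∈ S, e ≠ f → ¬ M✶.Indep {e, f})
    {e : α} (he : e ∈ S) :
    rk M M.E = rk M (M.E \ S) + (S \ {e}).ncard := by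
  obtain ⟨B₀, hB₀, hB₀e⟩ := (Matroid.coindep_def.mpr (hsing e he)).exists_isBase_subset_compl
  have h1 : rk M (M.E \ {e}) = rk M M.E := by
    refine le_antisymm (rk_mono hE Set.diff_subset) ?_
    rw [rk_ground_eq_ncard_base hE hB₀]
    have : B₀.ncard = rk M B₀ := (rk_indep hE hB₀.indep).symm
    rw [this]
    exact rk_mono hE hB₀e
  have h2 : M.E \ {e} = (M.E \ S) ∪ (S \ {e}) := by
    ext x
    constructor
    · rintro ⟨hxE, hxe⟩
      by_cases hxS : x ∈ S
      · exact Or.inr ⟨hxS, hxe⟩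
      · exact Or.inl ⟨hxE, hxS⟩
    · rintro (⟨hxE, hxS⟩ | ⟨hxS, hxe⟩)
      · exact ⟨hxE, fun hc => hxS (by rwa [← hc] at he)⟩
      · exact ⟨hSE hxS, hxe⟩
  rw [← h1, h2, rk_union_eq hE hSE hsing hpair subset_rfl
    (Set.sdiff_singleton_ssubset.mpr he)]

end SeriesBasics

section MinorRank

variable {M : Matroid α} {S : Set α}

@[simp] lemma contractSet_ground : (contractSet M S).E = M.E \ S := rfl

@[simp] lemma deleteSet_ground : (deleteSet M S).E = M.E \ S := rfl

lemma rk_deleteSet {B : Set α} (hB : B ⊆ M.E \ S) : rk (deleteSet M S) B = rk M B := by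
  unfold rk
  congr 1
  ext n
  constructor
  · rintro ⟨I, hI, hIB, rfl⟩
    exact ⟨I, (Matroid.restrict_indep_iff.mp hI).1, hIB, rfl⟩
  · rintro ⟨I, hI, hIB, rfl⟩
    exact ⟨I, Matroid.restrict_indep_iff.mpr ⟨hI, hIB.trans hB⟩, hIB, rfl⟩

lemma contractSet_indep_iff (hSE : S ⊆ M.E) (hSi : M.Indep S) {J : Set α} :
    (contractSet M S).Indep J ↔ J ⊆ M.E \ S ∧ M.Indep (J ∪ S) := by
  rw [contractSet, Matroid.dual_indep_iff_exists']
  simp only [Matroid.restrict_ground_eq]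
  have hground : (M✶).E = M.E := Matroid.dual_ground
  constructor
  · rintro ⟨hJ, BD, hBD, hdisj⟩
    rw [Matroid.isBase_restrict_iff', Matroid.isBasis'_iff_isBasis
      (by rw [hground]; exact Set.diff_subset)] at hBD
    obtain ⟨B', hB', hBDeq⟩ := hBD.exists_isBase
    have hbasisS : M.IsBasis ((M.E \ B') ∩ S) S := by
      have := hB'.compl_inter_isBasis_of_inter_isBasis (hBDeq ▸ hBD)
      simpa [Matroid.dual_dual, hground, Set.diff_diff_cancel_left hSE] using this
    have hScomp : S ⊆ M.E \ B' :=
      fun x hx => by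
        have : (M.E \ B') ∩ S = S := hbasisS.eq_of_subset_indep hSi Set.inter_subset_right
          subset_rfl
        rw [← this] at hx; exact hx.1
    refine ⟨hJ, Matroid.Indep.subset (hB'.compl_isBase_of_dual.indep) ?_⟩
    refine Set.union_subset (fun x hx => ⟨(hJ hx).1, fun hxB' => ?_⟩) hScomp
    · exact (Set.disjoint_left.mp hdisj hx) (hBDeq ▸ ⟨hxB', hJ hx⟩)
  · rintro ⟨hJ, hind⟩
    obtain ⟨B, hB, hsub⟩ := hind.exists_isBase_superset
    have hBS : M.IsBasis (B ∩ S) S := by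
      have : B ∩ S = S := Set.inter_eq_self_of_subset_right (Set.subset_union_right.trans hsub)
      rw [this]; exact hSi.isBasis_self
    have hdualbasis := hB.compl_inter_isBasis_of_inter_isBasis hBS
    refine ⟨hJ, (M.E \ B) ∩ (M.E \ S), ?_, ?_⟩
    · rw [Matroid.isBase_restrict_iff', Matroid.isBasis'_iff_isBasis
        (by rw [hground]; exact Set.diff_subset)]
      exact hdualbasis
    · exact Set.disjoint_left.mpr fun x hx hc =>
        hc.1.2 (hsub (Set.mem_union_left _ hx))

lemma rk_contractSet (hE : M.E.Finite) (hSE : S ⊆ M.E) (hSi : M.Indep S) {B : Set α}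
    (hB : B ⊆ M.E \ S) :
    rk (contractSet M S) B + S.ncard = rk M (B ∪ S) := by
  have hNE : (contractSet M S).E.Finite := by rw [contractSet_ground]; exact hE.diff
  obtain ⟨K, hK⟩ := (contractSet M S).exists_isBasis B (by rw [contractSet_ground]; exact hB)
  have hKind := (contractSet_indep_iff hSE hSi).mp hK.indep
  have hbasis : M.IsBasis (K ∪ S) (B ∪ S) := by
    refine hKind.2.isBasis_of_forall_insert (Set.union_subset_union_left S hK.subset) ?_
    rintro e ⟨he1, he2⟩
    have heBK : e ∈ B \ K := by
      rcases he1 with h | h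
      · exact ⟨h, fun hc => he2 (Set.mem_union_left _ hc)⟩
      · exact absurd (Set.mem_union_right _ h) he2
    have hdepN : ¬ (contractSet M S).Indep (insert e K) :=
      ((hK.insert_dep heBK).1 : ¬ _)
    rw [contractSet_indep_iff hSE hSi] at hdepN
    have hins : insert e K ⊆ M.E \ S :=
      Set.insert_subset (hB heBK.1) (hK.indep.subset_ground.trans (by rw [contractSet_ground]))
    have : ¬ M.Indep (insert e K ∪ S) := fun hc => hdepN ⟨hins, hc⟩
    rw [Set.insert_union] at this
    exact ⟨this, Set.insert_subset ((hB heBK.1).1)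
      (Set.union_subset (hKind.1.trans Set.diff_subset) hSE)⟩
  have hdisj : Disjoint K S := Set.disjoint_left.mpr fun x hx hxS => (hKind.1 hx).2 hxS
  rw [rk_eq_ncard_of_basis hE (Set.union_subset (hB.trans Set.diff_subset) hSE) hbasis,
    Set.ncard_union_eq hdisj (hE.subset (hKind.1.trans Set.diff_subset)) (hE.subset hSE),
    rk_eq_ncard_of_basis hNE (by rw [contractSet_ground]; exact hB) hK]

end MinorRank

section Sums

lemma choose_sum_eq_geom (p : ℕ) :
    ∑ t ∈ range (p + 1), ((p + 1).choose t : MvPolynomial (Fin 2) ℤ) * (X 0 - 1) ^ (p - t)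
      = ∑ i ∈ range (p + 1), (X 0 : MvPolynomial (Fin 2) ℤ) ^ i := by
  have hz : (X 0 - 1 : MvPolynomial (Fin 2) ℤ) ≠ 0 := by
    intro h
    have := congrArg constantCoeff h
    simp at this
  apply mul_right_cancel₀ hz
  rw [geom_sum_mul, Finset.sum_mul]
  set z : MvPolynomial (Fin 2) ℤ := X 0 - 1 with hzdef
  have step1 : ∀ t ∈ range (p + 1),
      ((p + 1).choose t : MvPolynomial (Fin 2) ℤ) * z ^ (p - t) * z
        = ((p + 1).choose t : MvPolynomial (Fin 2) ℤ) * z ^ (p + 1 - t) := by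
    intro t ht
    rw [mem_range] at ht
    rw [mul_assoc, ← pow_succ]
    congr 2
    omega
  rw [Finset.sum_congr rfl step1]
  have hfull : ∑ t ∈ range (p + 2),
      ((p + 1).choose t : MvPolynomial (Fin 2) ℤ) * z ^ (p + 1 - t)
      = (X 0 : MvPolynomial (Fin 2) ℤ) ^ (p + 1) := by
    have hrefl := Finset.sum_range_reflect
      (fun t => ((p + 1).choose t : MvPolynomial (Fin 2) ℤ) * z ^ (p + 1 - t)) (p + 2)
    have hx : (X 0 : MvPolynomial (Fin 2) ℤ) = z + 1 := by rw [hzdef]; ring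
    rw [hx, add_pow z 1 (p + 1), ← hrefl]
    refine Finset.sum_congr rfl ?_
    intro j hj
    rw [mem_range] at hj
    have h1 : p + 2 - 1 - j = p + 1 - j := by omega
    have h2 : p + 1 - (p + 1 - j) = j := by omega
    have h3 : (p + 1).choose (p + 1 - j) = (p + 1).choose j := Nat.choose_symm (by omega)
    rw [h1, h2, h3, one_pow, mul_one, mul_comm]
  have := Finset.sum_range_succ
    (fun t => ((p + 1).choose t : MvPolynomial (Fin 2) ℤ) * z ^ (p + 1 - t)) (p + 1)
  rw [this] at hfull
  simp only [Nat.choose_self, Nat.cast_one, Nat.sub_self, pow_zero, one_mul] at hfull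
  linear_combination hfull

lemma sum_powerset_union {R : Type*} [AddCommMonoid R] {Df Sf : Finset α}
    (h : Disjoint Df Sf) (f : Finset α → R) :
    ∑ A ∈ (Df ∪ Sf).powerset, f A = ∑ B ∈ Df.powerset, ∑ T ∈ Sf.powerset, f (B ∪ T) := by
  rw [← Finset.sum_product']
  refine Finset.sum_nbij' (i := fun A => (A ∩ Df, A ∩ Sf)) (j := fun P => P.1 ∪ P.2)
    ?_ ?_ ?_ ?_ ?_
  · intro A hA
    simp only [Finset.mem_product, Finset.mem_powerset]
    exact ⟨Finset.inter_subset_right, Finset.inter_subset_right⟩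
  · rintro ⟨B, T⟩ hP
    simp only [Finset.mem_product, Finset.mem_powerset] at hP ⊢
    exact Finset.union_subset (hP.1.trans Finset.subset_union_left)
      (hP.2.trans Finset.subset_union_right)
  · intro A hA
    rw [Finset.mem_powerset] at hA
    show A ∩ Df ∪ A ∩ Sf = A
    rw [← Finset.inter_union_distrib_left]
    exact Finset.inter_eq_left.mpr hA
  · rintro ⟨B, T⟩ hP
    simp only [Finset.mem_product, Finset.mem_powerset] at hP
    have h1 : (B ∪ T) ∩ Df = B := by
      ext x
      simp only [Finset.mem_inter, Finset.mem_union]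
      constructor
      · rintro ⟨hx1 | hx2, hxD⟩
        · exact hx1
        · exact absurd hxD (Finset.disjoint_right.mp h (hP.2 hx2))
      · exact fun hx => ⟨Or.inl hx, hP.1 hx⟩
    have h2 : (B ∪ T) ∩ Sf = T := by
      ext x
      simp only [Finset.mem_inter, Finset.mem_union]
      constructor
      · rintro ⟨hx1 | hx2, hxS⟩
        · exact absurd hxS (Finset.disjoint_left.mp h (hP.1 hx1))
        · exact hx2
      · exact fun hx => ⟨Or.inr hx, hP.2 hx⟩
    simp [h1, h2]
  · intro A hA
    rw [Finset.mem_powerset] at hA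
    show f A = f (A ∩ Df ∪ A ∩ Sf)
    rw [← Finset.inter_union_distrib_left, Finset.inter_eq_left.mpr hA]

lemma sum_erase_pow {Sf : Finset α} {p : ℕ} (hcard : Sf.card = p + 1) :
    ∑ T ∈ Sf.powerset.erase Sf, ((X 0 : MvPolynomial (Fin 2) ℤ) - 1) ^ (p - T.card)
      = ∑ t ∈ range (p + 1),
          ((p + 1).choose t : MvPolynomial (Fin 2) ℤ) * (X 0 - 1) ^ (p - t) := by
  set z : MvPolynomial (Fin 2) ℤ := X 0 - 1
  have herase := Finset.add_sum_erase Sf.powerset (fun T => z ^ (p - T.card))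
    (Finset.mem_powerset_self Sf)
  have hfull : ∑ T ∈ Sf.powerset, z ^ (p - T.card)
      = (∑ t ∈ range (p + 1),
          ((p + 1).choose t : MvPolynomial (Fin 2) ℤ) * z ^ (p - t)) + 1 := by
    rw [Finset.sum_powerset]
    rw [hcard]
    have hinner : ∀ j ∈ range (p + 2), ∑ T ∈ Finset.powersetCard j Sf, z ^ (p - T.card)
        = ((p + 1).choose j : MvPolynomial (Fin 2) ℤ) * z ^ (p - j) := by
      intro j hj
      rw [Finset.sum_congr rfl (fun T hT => by
        rw [(Finset.mem_powersetCard.mp hT).2]), Finset.sum_const,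
        Finset.card_powersetCard, hcard, nsmul_eq_mul]
    rw [Finset.sum_congr rfl hinner, Finset.sum_range_succ]
    simp
  rw [hfull] at herase
  simp only [hcard, show p - (p + 1) = 0 from by omega, pow_zero] at herase
  linear_combination herase

lemma tutte_eq_sum (M : Matroid α) (hE : M.E.Finite) {F : Finset α} (hF : ↑F = M.E) :
    tutte M = ∑ A ∈ F.powerset,
      (X 0 - 1) ^ (rk M M.E - rk M ↑A) * (X 1 - 1) ^ (A.card - rk M ↑A) := by
  rw [tutte, dif_pos hE]
  have hFE : hE.toFinset = F := Finset.coe_injective (by rw [hE.coe_toFinset, hF])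
  rw [hFE]

end Sums

/-- if `S` is a series class of size `p + 1` that is not a circuit, then
`T_M = (x^p + ⋯ + x + 1) T_{M∖S} + T_{M/S}`. -/
theorem tutte_seriesClass (M : Matroid α) (hE : M.E.Finite) (S : Set α) (p : ℕ)
    (hS : IsParallelClass (M✶) S) (hcard : S.ncard = p + 1) (hnc : ¬ IsCircuit M S) :
    tutte M = (∑ i ∈ range (p + 1), X 0 ^ i) * tutte (deleteSet M S)
      + tutte (contractSet M S) := by
  classical
  obtain ⟨hSE', hnl, hcircs, -⟩ := hS
  have hSE : S ⊆ M.E := by rwa [Matroid.dual_ground] at hSE'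
  have hSfin : S.Finite := hE.subset hSE
  have hEdual : (M✶).E.Finite := by rwa [Matroid.dual_ground]
  have hsing : ∀ e ∈ S, M✶.Indep {e} := by
    intro e he
    have h0 : rk (M✶) {e} ≠ 0 := hnl e he
    obtain ⟨I, hI, hIe, hIcard⟩ := exists_indep_of_rk hEdual ({e} : Set α)
    rcases Set.subset_singleton_iff_eq.mp hIe with rfl | rfl
    · rw [← hIcard, Set.ncard_empty] at h0; exact absurd rfl h0
    · exact hI
  have hpair : ∀ e ∈ S, ∀ f ∈ S, e ≠ f → ¬ M✶.Indep {e, f} := by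
    intro e he f hf hef
    exact (hcircs e he f hf hef).2.1
  have hSi : M.Indep S := S_indep hE hSE hsing hpair hnc
  have hrkS : rk M S = p + 1 := by rw [rk_indep hE hSi, hcard]
  obtain ⟨e₀, he₀⟩ : S.Nonempty := by
    apply Set.nonempty_of_ncard_ne_zero; omega
  have hrkE : rk M M.E = rk M (M.E \ S) + p := by
    have h := rk_ground_aux hE hSE hsing hpair he₀
    rwa [Set.ncard_diff_singleton_of_mem he₀, hcard, Nat.add_sub_cancel] at h
  set N := contractSet M S with hN
  set Ef : Finset α := hE.toFinset with hEf
  set Sf : Finset α := hSfin.toFinset with hSf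
  have hSfE : Sf ⊆ Ef := by
    rw [hSf, hEf, Set.Finite.toFinset_subset_toFinset]; exact hSE
  set Df : Finset α := Ef \ Sf with hDf
  have hdisj : Disjoint Df Sf := Finset.sdiff_disjoint
  have hunion : Df ∪ Sf = Ef := Finset.sdiff_union_of_subset hSfE
  have hDfcoe : (↑Df : Set α) = M.E \ S := by
    rw [hDf, Finset.coe_sdiff, hEf, hSf, Set.Finite.coe_toFinset, Set.Finite.coe_toFinset]
  have hSfcoe : (↑Sf : Set α) = S := hSfin.coe_toFinset
  have hSfcard : Sf.card = p + 1 := by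
    rw [hSf, ← Set.ncard_eq_toFinset_card S hSfin, hcard]
  have hNEfin : N.E.Finite := by rw [hN, contractSet_ground]; exact hE.diff
  have hdelEfin : (deleteSet M S).E.Finite := by rw [deleteSet_ground]; exact hE.diff
  have hNground : rk N N.E + (p + 1) = rk M M.E := by
    have h := rk_contractSet hE hSE hSi (subset_rfl : M.E \ S ⊆ M.E \ S)
    rw [hcard, Set.diff_union_of_subset hSE] at h
    rw [hN, contractSet_ground]
    exact h
  have hinner : ∀ B ∈ Df.powerset,
      (∑ T ∈ Sf.powerset, (X 0 - 1) ^ (rk M M.E - rk M ↑(B ∪ T))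
        * (X 1 - 1) ^ ((B ∪ T).card - rk M ↑(B ∪ T)))
      = (∑ i ∈ range (p + 1), (X 0 : MvPolynomial (Fin 2) ℤ) ^ i) *
          ((X 0 - 1) ^ (rk M (M.E \ S) - rk M ↑B) * (X 1 - 1) ^ (B.card - rk M ↑B))
        + (X 0 - 1) ^ (rk N N.E - rk N ↑B) * (X 1 - 1) ^ (B.card - rk N ↑B) := by
    intro B hB
    rw [Finset.mem_powerset] at hB
    have hBcoe : (↑B : Set α) ⊆ M.E \ S := by
      rw [← hDfcoe]; exact Finset.coe_subset.mpr hB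
    have hBdisj : Disjoint B Sf := Finset.disjoint_of_subset_left hB hdisj
    rw [← Finset.add_sum_erase _ _ (Finset.mem_powerset_self Sf)]
    have hcontr : (X 0 - 1 : MvPolynomial (Fin 2) ℤ) ^ (rk M M.E - rk M ↑(B ∪ Sf))
        * (X 1 - 1) ^ ((B ∪ Sf).card - rk M ↑(B ∪ Sf))
        = (X 0 - 1) ^ (rk N N.E - rk N ↑B) * (X 1 - 1) ^ (B.card - rk N ↑B) := by
      have h1 : rk N ↑B + (p + 1) = rk M (↑B ∪ S) := by
        have h := rk_contractSet hE hSE hSi hBcoe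
        rwa [hcard] at h
      have h3 : p + 1 ≤ rk M (↑B ∪ S) := by
        have h := rk_mono (M := M) hE (Set.subset_union_right : S ⊆ ↑B ∪ S)
        rwa [hrkS] at h
      have h4 : rk M (↑B ∪ S) ≤ rk M M.E :=
        rk_mono hE (Set.union_subset (hBcoe.trans Set.diff_subset) hSE)
      have hcoe : (↑(B ∪ Sf) : Set α) = ↑B ∪ S := by rw [Finset.coe_union, hSfcoe]
      have hcardU : (B ∪ Sf).card = B.card + (p + 1) := by
        rw [Finset.card_union_of_disjoint hBdisj, hSfcard]
      rw [hcoe, hcardU]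
      congr 1
      · congr 1; omega
      · congr 1; omega
    have hstep : ∀ T ∈ Sf.powerset.erase Sf,
        (X 0 - 1 : MvPolynomial (Fin 2) ℤ) ^ (rk M M.E - rk M ↑(B ∪ T))
          * (X 1 - 1) ^ ((B ∪ T).card - rk M ↑(B ∪ T))
        = (X 0 - 1) ^ (p - T.card) *
          ((X 0 - 1) ^ (rk M (M.E \ S) - rk M ↑B) * (X 1 - 1) ^ (B.card - rk M ↑B)) := by
      intro T hT
      rw [Finset.mem_erase, Finset.mem_powerset] at hT
      have hTss : T ⊂ Sf := lt_of_le_of_ne hT.2 hT.1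
      have hTss' : (↑T : Set α) ⊂ S := by
        rw [← hSfcoe]; exact Finset.coe_ssubset.mpr hTss
      have hrkU : rk M ↑(B ∪ T) = rk M ↑B + T.card := by
        rw [Finset.coe_union, rk_union_eq hE hSE hsing hpair hBcoe hTss',
          Set.ncard_coe_finset]
      have hcardU : (B ∪ T).card = B.card + T.card :=
        Finset.card_union_of_disjoint (Finset.disjoint_of_subset_right hT.2 hBdisj)
      have hble : rk M ↑B ≤ rk M (M.E \ S) := rk_mono hE hBcoe
      have htle : T.card ≤ p := by
        have := Finset.card_lt_card hTss
        omega
      have hx : rk M M.E - rk M ↑(B ∪ T)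
          = (p - T.card) + (rk M (M.E \ S) - rk M ↑B) := by
        rw [hrkU]; omega
      have hy : (B ∪ T).card - rk M ↑(B ∪ T) = B.card - rk M ↑B := by
        rw [hrkU, hcardU]; omega
      rw [hx, hy, pow_add]
      ring
    rw [Finset.sum_congr rfl hstep, ← Finset.sum_mul, sum_erase_pow hSfcard,
      choose_sum_eq_geom, hcontr]
    ring
  have hdel : tutte (deleteSet M S) = ∑ B ∈ Df.powerset,
      (X 0 - 1) ^ (rk M (M.E \ S) - rk M ↑B) * (X 1 - 1) ^ (B.card - rk M ↑B) := by
    rw [tutte_eq_sum (deleteSet M S) hdelEfin (F := Df)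
      (by rw [hDfcoe, deleteSet_ground])]
    refine Finset.sum_congr rfl ?_
    intro B hB
    rw [Finset.mem_powerset] at hB
    have hBcoe : (↑B : Set α) ⊆ M.E \ S := by
      rw [← hDfcoe]; exact Finset.coe_subset.mpr hB
    rw [deleteSet_ground, rk_deleteSet hBcoe, rk_deleteSet (subset_rfl : M.E \ S ⊆ M.E \ S)]
  have hcon : tutte (contractSet M S) = ∑ B ∈ Df.powerset,
      (X 0 - 1) ^ (rk N N.E - rk N ↑B) * (X 1 - 1) ^ (B.card - rk N ↑B) := by
    rw [← hN]
    exact tutte_eq_sum N hNEfin (F := Df) (by rw [hDfcoe, hN, contractSet_ground])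
  calc tutte M
      = ∑ B ∈ Df.powerset, ∑ T ∈ Sf.powerset,
          (X 0 - 1) ^ (rk M M.E - rk M ↑(B ∪ T))
            * (X 1 - 1) ^ ((B ∪ T).card - rk M ↑(B ∪ T)) := by
        rw [tutte_eq_sum M hE (F := Ef) (by rw [hEf, Set.Finite.coe_toFinset]), ← hunion,
          sum_powerset_union hdisj]
    _ = ∑ B ∈ Df.powerset,
          ((∑ i ∈ range (p + 1), (X 0 : MvPolynomial (Fin 2) ℤ) ^ i) *
            ((X 0 - 1) ^ (rk M (M.E \ S) - rk M ↑B) * (X 1 - 1) ^ (B.card - rk M ↑B))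
          + (X 0 - 1) ^ (rk N N.E - rk N ↑B) * (X 1 - 1) ^ (B.card - rk N ↑B)) :=
        Finset.sum_congr rfl hinner
    _ = (∑ i ∈ range (p + 1), X 0 ^ i) * tutte (deleteSet M S) + tutte (contractSet M S) := by
        rw [Finset.sum_add_distrib, ← Finset.mul_sum, hdel, hcon]

end TuttePaper
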